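/- Let G be a strongly left-invariant metric semigroup with no two-sided identity. Define G₀ := G ⊔ {e} with e acting as a two-sided identity, and extend the metric by d(e,e) := 0 and d(e,g) = d(g,e) := d(g, g²) for g ∈ G. Then d is a left-invariant metric on the monoid G₀, and G embeds isometrically and homomorphically into G₀. -/

import Mathlib

section Aux

variable {G : Type*} [Semigroup G] [MetricSpace G]

/-- The extended distance on `WithOne G`. -/
noncomputable def extDist : WithOne G → WithOne G → ℝ :=
  fun x y => WithOne.recOneCoe (WithOne.recOneCoe 0 (fun b => dist b (b*b)) y)
    (fun a => WithOne.recOneCoe (dist a (a*a)) (fun b => dist a b) y) x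

lemma extDist_one_one : extDist (G := G) 1 1 = 0 := rfl
lemma extDist_one_coe (b : G) : extDist (1 : WithOne G) b = dist b (b*b) := rfl
lemma extDist_coe_one (a : G) : extDist (a : WithOne G) 1 = dist a (a*a) := rfl
lemma extDist_coe_coe (a b : G) : extDist (a : WithOne G) b = dist a b := rfl

/-- An idempotent is a two-sided identity. -/
lemma idem_is_id (hleft : ∀ a b c : G, dist (c * a) (c * b) = dist a b)
    (hstrong : ∀ a b : G, dist a (a * b) = dist b (b * b))
    (g : G) (hg : g * g = g) : ∀ x : G, g * x = x ∧ x * g = x := by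
  intro x
  constructor
  · have h1 : dist (g * x) (g * (g * x)) = dist x (g * x) := hleft x (g * x) g
    rw [← mul_assoc, hg] at h1
    simp only [dist_self] at h1
    exact (eq_of_dist_eq_zero h1.symm).symm
  · have h2 : dist x (x * g) = dist g (g * g) := hstrong x g
    rw [hg, dist_self] at h2
    exact (eq_of_dist_eq_zero h2).symm

/-- Key triangle estimate: `d(a,b) ≤ d(a,a²) + d(b,b²)`. -/
lemma tri_main (hleft : ∀ a b c : G, dist (c * a) (c * b) = dist a b)
    (hstrong : ∀ a b : G, dist a (a * b) = dist b (b * b))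
    (a b : G) : dist a b ≤ dist a (a*a) + dist b (b*b) := by
  have h1 : dist a b = dist (a*a) (a*b) := (hleft a b a).symm
  have h2 : dist (a*a) (a*b) ≤ dist (a*a) a + dist a (a*b) := dist_triangle _ _ _
  have h3 : dist a (a*b) = dist b (b*b) := hstrong a b
  have h4 : dist (a*a) a = dist a (a*a) := dist_comm _ _
  linarith

end Aux

/-- A strongly left-invariant metric semigroup `G` without a two-sided identity embeds
isometrically and homomorphically into the left-invariant metric monoid `G₀ = G ⊔ {e}`
(realized as `WithOne G`, whose multiplication extends that of `G` with `e = 1` a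
two-sided identity), where the metric is extended by `d(e,e) = 0`, `d(e,g) = d(g,g²)`. -/
theorem embed_into_leftInvariant_monoid {G : Type*} [Semigroup G] [MetricSpace G]
    (hleft : ∀ a b c : G, dist (c * a) (c * b) = dist a b)
    (hstrong : ∀ a b : G, dist a (a * b) = dist b (b * b))
    (hnoid : ¬ ∃ e : G, ∀ g : G, e * g = g ∧ g * e = g) :
    ∃ D : WithOne G → WithOne G → ℝ,
      (∀ x, D x x = 0) ∧
      (∀ x y, D x y = 0 → x = y) ∧
      (∀ x y, D x y = D y x) ∧
      (∀ x y z, D x z ≤ D x y + D y z) ∧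
      (∀ c a b : WithOne G, D (c * a) (c * b) = D a b) ∧
      (∀ a b : G, D (a : WithOne G) (b : WithOne G) = dist a b) ∧
      (∀ g : G, D (1 : WithOne G) (g : WithOne G) = dist g (g * g)) := by
  refine ⟨extDist, ?_, ?_, ?_, ?_, ?_, fun a b => rfl, fun g => rfl⟩
  · intro x
    induction x using WithOne.recOneCoe with
    | one => rfl
    | coe a => exact dist_self a
  · intro x y
    induction x using WithOne.recOneCoe with
    | one =>
      induction y using WithOne.recOneCoe with
      | one => intro _; rfl
      | coe b =>
        intro h
        rw [extDist_one_coe] at h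
        have hb : b * b = b := (eq_of_dist_eq_zero h).symm
        exact absurd ⟨b, idem_is_id hleft hstrong b hb⟩ hnoid
    | coe a =>
      induction y using WithOne.recOneCoe with
      | one =>
        intro h
        rw [extDist_coe_one] at h
        have ha : a * a = a := (eq_of_dist_eq_zero h).symm
        exact absurd ⟨a, idem_is_id hleft hstrong a ha⟩ hnoid
      | coe b =>
        intro h
        rw [extDist_coe_coe] at h
        exact congrArg _ (eq_of_dist_eq_zero h)
  · intro x y
    induction x using WithOne.recOneCoe with
    | one =>
      induction y using WithOne.recOneCoe with
      | one => rfl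
      | coe b => rfl
    | coe a =>
      induction y using WithOne.recOneCoe with
      | one => rfl
      | coe b => exact dist_comm a b
  · intro x y z
    induction x using WithOne.recOneCoe with
    | one =>
      induction y using WithOne.recOneCoe with
      | one =>
        induction z using WithOne.recOneCoe with
        | one => simp [extDist_one_one]
        | coe c => simp [extDist_one_one, extDist_one_coe]
      | coe b =>
        induction z using WithOne.recOneCoe with
        | one =>
          rw [extDist_one_one, extDist_one_coe, extDist_coe_one]
          positivity
        | coe c =>
          -- d(c,c²) ≤ d(b,b²) + d(b,c)
          rw [extDist_one_coe, extDist_one_coe, extDist_coe_coe]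
          have h1 : dist c (c*c) = dist b (b*c) := (hstrong b c).symm
          have h2 : dist b (b*c) ≤ dist b (b*b) + dist (b*b) (b*c) := dist_triangle _ _ _
          have h3 : dist (b*b) (b*c) = dist b c := hleft b c b
          linarith
    | coe a =>
      induction y using WithOne.recOneCoe with
      | one =>
        induction z using WithOne.recOneCoe with
        | one =>
          rw [extDist_coe_one, extDist_one_one]
          simp
        | coe c =>
          rw [extDist_coe_coe, extDist_coe_one, extDist_one_coe]
          exact tri_main hleft hstrong a c
      | coe b =>
        induction z using WithOne.recOneCoe with
        | one =>
          -- d(a,a²) ≤ d(a,b) + d(b,b²)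
          rw [extDist_coe_one, extDist_coe_coe, extDist_coe_one]
          have h1 : dist a (a*a) = dist b (b*a) := (hstrong b a).symm
          have h2 : dist b (b*a) ≤ dist b (b*b) + dist (b*b) (b*a) := dist_triangle _ _ _
          have h3 : dist (b*b) (b*a) = dist b a := hleft b a b
          have h4 : dist b a = dist a b := dist_comm b a
          linarith
        | coe c =>
          rw [extDist_coe_coe, extDist_coe_coe, extDist_coe_coe]
          exact dist_triangle a b c
  · intro c a b
    induction c using WithOne.recOneCoe with
    | one => rw [one_mul, one_mul]
    | coe g =>
      induction a using WithOne.recOneCoe with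
      | one =>
        induction b using WithOne.recOneCoe with
        | one => rw [mul_one, extDist_coe_coe, extDist_one_one, dist_self]
        | coe b =>
          rw [mul_one, ← WithOne.coe_mul, extDist_coe_coe, extDist_one_coe]
          exact hstrong g b
      | coe a =>
        induction b using WithOne.recOneCoe with
        | one =>
          rw [mul_one, ← WithOne.coe_mul, extDist_coe_coe, extDist_coe_one, dist_comm]
          exact hstrong g a
        | coe b =>
          rw [← WithOne.coe_mul, ← WithOne.coe_mul, extDist_coe_coe, extDist_coe_coe]
          exact hleft a b g
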